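/- Let b ≥ 2 be an integer and H_b(X) = ∑_{n=0}^{∞} h_{1,b}(n) X^n ∈ ℤ[[X]]. Then H_b satisfies the functional equation H_b(X) = X · (1 - X²)⁻¹ · H_b(X²) + (b-1) X · (1 - X²)⁻¹ + ((1 - X²)⁻¹)², where (1 - X²)⁻¹ is the multiplicative inverse of the unit 1 - X² in ℤ[[X]] and H_b(X²) denotes the substitution of X² into H_b. -/

import Mathlib

/-- For `b ≥ 2`, the generating function `H_b(X) = ∑ h_{1,b}(n) Xⁿ`
in `ℤ[[X]]` satisfies
`H_b(X) = X (1-X²)⁻¹ H_b(X²) + (b-1) X (1-X²)⁻¹ + ((1-X²)⁻¹)²`.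
Here `U` is the multiplicative inverse of the unit `1 - X²` in `ℤ[[X]]` and `H2`
is the substitution `H_b(X²)`, characterized by its coefficients. -/
theorem stmt12 (b : ℕ) (hb : 2 ≤ b) (h : ℤ → ℕ)
    (hneg : ∀ n : ℤ, n ≤ 0 → h n = 1) (hone : h 1 = b)
    (hrec : ∀ n : ℤ, 2 ≤ n → h n = h (n - (h (n - 1) : ℤ)) + h (n - 2))
    (H : PowerSeries ℤ) (hH : ∀ n : ℕ, PowerSeries.coeff (R := ℤ) n H = (h n : ℤ))
    (U : PowerSeries ℤ) (hU : (1 - PowerSeries.X ^ 2) * U = 1)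
    (H2 : PowerSeries ℤ)
    (hH2e : ∀ n : ℕ, PowerSeries.coeff (R := ℤ) (2 * n) H2 = (h n : ℤ))
    (hH2o : ∀ n : ℕ, PowerSeries.coeff (R := ℤ) (2 * n + 1) H2 = 0) :
    H = PowerSeries.X * U * H2 +
        PowerSeries.C (R := ℤ) ((b : ℤ) - 1) * PowerSeries.X * U + U ^ 2 := by
  -- Key structural facts about h
  have key : ∀ n : ℕ, h (2 * (n : ℤ)) = n + 1 ∧ 2 * n + 2 ≤ h (2 * (n : ℤ) + 1) := by
    intro n
    induction n using Nat.strong_induction_on with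
    | _ n ih =>
      match n with
      | 0 =>
        constructor
        · simpa using hneg 0 le_rfl
        · simpa [hone] using hb
      | Nat.succ m =>
        obtain ⟨ihA, ihB⟩ := ih m (Nat.lt_succ_self m)
        -- even part: h(2m+2) = m+2
        have e1 := hrec (2 * (m : ℤ) + 2) (by omega)
        have r1 : (2 * (m : ℤ) + 2 - 1) = 2 * (m : ℤ) + 1 := by ring
        have r2 : (2 * (m : ℤ) + 2 - 2) = 2 * (m : ℤ) := by ring
        rw [r1, r2] at e1
        have harg : (2 * (m : ℤ) + 2) - (h (2 * (m : ℤ) + 1) : ℤ) ≤ 0 := by omega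
        rw [hneg _ harg, ihA] at e1
        have hA2 : h (2 * ((m : ℤ) + 1)) = m + 2 := by
          have : (2 * ((m : ℤ) + 1)) = 2 * (m : ℤ) + 2 := by ring
          rw [this, e1]; omega
        -- h(k) ≥ 2 for 1 ≤ k ≤ m+1
        have hge2 : 2 ≤ h ((m : ℤ) + 1) := by
          rcases Nat.even_or_odd (m + 1) with ⟨k, hk⟩ | ⟨k, hk⟩
          · have hk1 : 1 ≤ k := by omega
            have hkm : k < m + 1 := by omega
            have := (ih k hkm).1
            have hc : ((m : ℤ) + 1) = 2 * (k : ℤ) := by push_cast; omega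
            rw [hc, this]; omega
          · rcases Nat.eq_zero_or_pos k with hk0 | hkpos
            · subst hk0
              have hc : ((m : ℤ) + 1) = 1 := by push_cast; omega
              rw [hc, hone]; omega
            · have hkm : k < m + 1 := by omega
              have := (ih k hkm).2
              have hc : ((m : ℤ) + 1) = 2 * (k : ℤ) + 1 := by push_cast; omega
              rw [hc]; omega
        -- odd part: h(2m+3) ≥ 2m+4
        have e2 := hrec (2 * (m : ℤ) + 3) (by omega)
        have r3 : (2 * (m : ℤ) + 3 - 1) = 2 * ((m : ℤ) + 1) := by ring
        have r4 : (2 * (m : ℤ) + 3 - 2) = 2 * (m : ℤ) + 1 := by ring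
        rw [r3, r4, hA2] at e2
        have r5 : (2 * (m : ℤ) + 3 - ((m + 2 : ℕ) : ℤ)) = (m : ℤ) + 1 := by push_cast; ring
        rw [r5] at e2
        constructor
        · have : (2 * ((m + 1 : ℕ) : ℤ)) = 2 * ((m : ℤ) + 1) := by push_cast; ring
          rw [this, hA2]
        · have : (2 * ((m + 1 : ℕ) : ℤ) + 1) = 2 * (m : ℤ) + 3 := by push_cast; ring
          rw [this, e2]; omega
  have heven : ∀ n : ℕ, h (2 * (n : ℤ)) = n + 1 := fun n => (key n).1
  -- odd recurrence
  have hodd : ∀ k : ℕ, h (2 * (k : ℤ) + 3) = h ((k : ℤ) + 1) + h (2 * (k : ℤ) + 1) := by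
    intro k
    have e := hrec (2 * (k : ℤ) + 3) (by omega)
    have r1 : (2 * (k : ℤ) + 3 - 1) = 2 * ((k + 1 : ℕ) : ℤ) := by push_cast; ring
    have r2 : (2 * (k : ℤ) + 3 - 2) = 2 * (k : ℤ) + 1 := by ring
    rw [r1, r2, heven (k + 1)] at e
    have r3 : (2 * (k : ℤ) + 3 - ((k + 1 + 1 : ℕ) : ℤ)) = (k : ℤ) + 1 := by push_cast; ring
    rw [r3] at e
    exact e
  -- coefficients of U
  have hU' : U - PowerSeries.X ^ 2 * U = 1 := by
    rw [← hU]; ring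
  have hUc : ∀ n : ℕ, PowerSeries.coeff (R := ℤ) n U = if n % 2 = 0 then 1 else 0 := by
    intro n
    induction n using Nat.strong_induction_on with
    | _ n ih =>
      match n with
      | 0 =>
        have := congrArg (PowerSeries.coeff (R := ℤ) 0) hU'
        simp [PowerSeries.coeff_X_pow_mul'] at this
        simpa using this
      | 1 =>
        have := congrArg (PowerSeries.coeff (R := ℤ) 1) hU'
        simp [PowerSeries.coeff_X_pow_mul'] at this
        simpa using this
      | Nat.succ (Nat.succ m) =>
        have := congrArg (PowerSeries.coeff (R := ℤ) (m + 2)) hU'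
        rw [map_sub, PowerSeries.coeff_X_pow_mul U 2 m] at this
        simp only [PowerSeries.coeff_one] at this
        have hm := ih m (by omega)
        have h2 : (m + 2) % 2 = m % 2 := by omega
        rw [h2]
        have hne : m + 2 ≠ 0 := by omega
        rw [if_neg hne] at this
        have heq : PowerSeries.coeff (R := ℤ) (m + 2) U = PowerSeries.coeff (R := ℤ) m U := by linarith
        rw [heq, hm]
  -- the functional equation multiplied through by (1 - X^2)
  have step : (1 - PowerSeries.X ^ 2) * H =
      PowerSeries.X * H2 + PowerSeries.C (R := ℤ) ((b : ℤ) - 1) * PowerSeries.X + U := by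
    ext n
    rw [sub_mul, one_mul, map_sub, map_add, map_add, PowerSeries.coeff_X_pow_mul',
      PowerSeries.coeff_C_mul, PowerSeries.coeff_X, hUc]
    match n with
    | 0 =>
      rw [PowerSeries.coeff_zero_X_mul, hH 0, if_neg (by omega), if_neg (by omega),
        if_pos (by omega)]
      have h0 : h ((0 : ℕ) : ℤ) = 1 := by norm_num [hneg 0 le_rfl]
      rw [h0]; push_cast; ring
    | 1 =>
      rw [PowerSeries.coeff_succ_X_mul, if_neg (by omega), if_pos rfl, if_neg (by omega)]
      have h20 : PowerSeries.coeff (R := ℤ) 0 H2 = (h ((0 : ℕ) : ℤ) : ℤ) := by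
        have := hH2e 0
        rwa [show (2 * 0 : ℕ) = 0 from by norm_num] at this
      rw [hH 1, h20]
      have h0 : h ((0 : ℕ) : ℤ) = 1 := by norm_num [hneg 0 le_rfl]
      have h1 : h ((1 : ℕ) : ℤ) = b := by norm_num [hone]
      rw [h0, h1]; push_cast; ring
    | Nat.succ (Nat.succ m) =>
      rw [PowerSeries.coeff_succ_X_mul]
      have hif1 : (if 2 ≤ m + 2 then PowerSeries.coeff (R := ℤ) (m + 2 - 2) H else 0)
          = PowerSeries.coeff (R := ℤ) m H := by
        rw [if_pos (by omega)]
        norm_num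
      have hif2 : (((b : ℤ) - 1) * if m + 2 = 1 then (1:ℤ) else 0) = 0 := by
        rw [if_neg (by omega)]; ring
      rw [hif1, hif2, hH, hH]
      rcases Nat.even_or_odd m with ⟨k, hk⟩ | ⟨k, hk⟩
      · -- n = 2k + 2 even
        have hk' : m = 2 * k := by omega
        subst hk'
        have ho : PowerSeries.coeff (R := ℤ) (2 * k + 1) H2 = 0 := hH2o k
        rw [ho]
        have hc1 : ((2 * k + 2 : ℕ) : ℤ) = 2 * ((k + 1 : ℕ) : ℤ) := by push_cast; ring
        have hc2 : ((2 * k : ℕ) : ℤ) = 2 * ((k : ℕ) : ℤ) := by push_cast; ring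
        rw [hc1, hc2, heven (k + 1), heven k, if_pos (by omega)]
        push_cast
        ring
      · -- n = 2k + 3 odd
        have hk' : m = 2 * k + 1 := by omega
        subst hk'
        have he : PowerSeries.coeff (R := ℤ) (2 * k + 1 + 1) H2 = (h (k + 1 : ℕ) : ℤ) := by
          have := hH2e (k + 1)
          have hc : 2 * (k + 1) = 2 * k + 1 + 1 := by ring
          rwa [hc] at this
        rw [he, if_neg (by omega)]
        have hc1 : ((2 * k + 1 + 2 : ℕ) : ℤ) = 2 * (k : ℤ) + 3 := by push_cast; ring
        have hc2 : ((2 * k + 1 : ℕ) : ℤ) = 2 * (k : ℤ) + 1 := by push_cast; ring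
        have hc3 : ((k + 1 : ℕ) : ℤ) = (k : ℤ) + 1 := by push_cast; ring
        rw [hc1, hc2, hc3, hodd k]
        push_cast
        ring
  -- conclude
  calc H = ((1 - PowerSeries.X ^ 2) * U) * H := by rw [hU, one_mul]
    _ = U * ((1 - PowerSeries.X ^ 2) * H) := by ring
    _ = U * (PowerSeries.X * H2 + PowerSeries.C (R := ℤ) ((b : ℤ) - 1) * PowerSeries.X + U) := by
        rw [step]
    _ = PowerSeries.X * U * H2 + PowerSeries.C (R := ℤ) ((b : ℤ) - 1) * PowerSeries.X * U + U ^ 2 := by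
        ring
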